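/- arXiv:1606.06803 — 2 statements merged into one kernel-verified Lean document; each statement's English description precedes it below -/
import Mathlib

section
/- Let T : [0,1) → [0,1) be the tripling map T(x) = 3x - ⌊3x⌋. Suppose ψ ∈ [0,1) has ternary digits d₁d₂d₃... (d_n = ⌊3^n ψ⌋ mod 3) such that every even-indexed digit equals 2 and every odd-indexed digit is 0 or 1. Then for every l ∈ ℕ and every k ∈ {0,1,2,3}, |T^l(ψ) - k/3| > 1/27. -/
open Set

/-- The tripling map on `[0,1)`. -/
noncomputable def triplingMap (x : ℝ) : ℝ := 3 * x - ⌊3 * x⌋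

/-- The `n`-th ternary digit (n ≥ 1) of `x`. -/
noncomputable def ternDigit (x : ℝ) (n : ℕ) : ℤ := ⌊3 ^ n * x⌋ % 3

lemma floor_three_mul (w : ℝ) : ⌊3 * w⌋ = 3 * ⌊w⌋ + ⌊3 * w⌋ % 3 := by
  have h1 : 3 * ⌊w⌋ ≤ ⌊3 * w⌋ := by
    apply Int.le_floor.mpr
    push_cast
    nlinarith [Int.floor_le w]
  have h2 : ⌊3 * w⌋ < 3 * ⌊w⌋ + 3 := by
    apply Int.floor_lt.mpr
    push_cast
    nlinarith [Int.lt_floor_add_one w]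
  omega

lemma iter_tripling (x : ℝ) (hx : x ∈ Ico (0:ℝ) 1) (l : ℕ) :
    triplingMap^[l] x = Int.fract (3 ^ l * x) := by
  induction l with
  | zero => simp [Int.fract_eq_self.mpr ⟨hx.1, hx.2⟩]
  | succ n ih =>
    rw [Function.iterate_succ_apply', ih]
    have h1 : triplingMap (Int.fract (3 ^ n * x)) = Int.fract (3 * Int.fract (3 ^ n * x)) := by
      rw [triplingMap]; exact Int.self_sub_floor _
    rw [h1]
    have h2 : 3 * Int.fract (3 ^ n * x) = 3 ^ (n+1) * x - ((3 * ⌊3 ^ n * x⌋ : ℤ) : ℝ) := by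
      rw [Int.fract]; push_cast; ring
    rw [h2, Int.fract_sub_intCast]

lemma ternDigit_fract_shift (z : ℝ) (n : ℕ) (hn : 1 ≤ n) :
    ternDigit (Int.fract z) n = ⌊3 ^ n * z⌋ % 3 := by
  unfold ternDigit
  rw [Int.fract]
  have h : (3:ℝ) ^ n * (z - ⌊z⌋) = 3 ^ n * z - ((3 ^ n * ⌊z⌋ : ℤ) : ℝ) := by push_cast; ring
  rw [h, Int.floor_sub_intCast]
  have h3 : (3:ℤ) ∣ 3 ^ n * ⌊z⌋ := dvd_mul_of_dvd_left (dvd_pow_self 3 (by omega)) _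
  omega

lemma final_est (y : ℝ) (k : ℕ) (hk : k ≤ 3) (m : ℤ) (hm1 : (m:ℝ) ≤ 27*y)
    (hm2 : 27*y < m+1)
    (hmem : m = 6 ∨ m = 7 ∨ m = 15 ∨ m = 16 ∨ m = 20 ∨ m = 23) :
    |y - (k : ℝ) / 3| > 1 / 27 := by
  rw [gt_iff_lt, lt_abs]
  interval_cases k <;> rcases hmem with rfl|rfl|rfl|rfl|rfl|rfl <;>
    push_cast at hm1 hm2 <;>
    first | (left; push_cast; linarith) | (right; push_cast; linarith)

theorem tripling_orbit_away_from_thirds (ψ : ℝ) (hψ : ψ ∈ Ico (0 : ℝ) 1)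
    (hodd : ∀ n : ℕ, 1 ≤ n → Odd n → ternDigit ψ n = 0 ∨ ternDigit ψ n = 1)
    (heven : ∀ n : ℕ, 1 ≤ n → Even n → ternDigit ψ n = 2) :
    ∀ l : ℕ, ∀ k : ℕ, k ≤ 3 → |triplingMap^[l] ψ - (k : ℝ) / 3| > 1 / 27 := by
  intro l k hk
  have hy : triplingMap^[l] ψ = Int.fract (3 ^ l * ψ) := iter_tripling ψ hψ l
  set y := triplingMap^[l] ψ with hydef
  have hy0 : 0 ≤ y := by rw [hy]; exact Int.fract_nonneg _
  have hy1 : y < 1 := by rw [hy]; exact Int.fract_lt_one _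
  have hdig : ∀ n : ℕ, 1 ≤ n → ternDigit y n = ternDigit ψ (n + l) := by
    intro n hn
    rw [hy, ternDigit_fract_shift _ n hn]
    unfold ternDigit
    rw [← mul_assoc, ← pow_add]
  have hfl0 : ⌊y⌋ = 0 := Int.floor_eq_zero_iff.mpr ⟨hy0, hy1⟩
  have e1 : ⌊3 * y⌋ = ternDigit y 1 := by
    have h := floor_three_mul y
    unfold ternDigit
    rw [pow_one]
    omega
  have e2 : ⌊9 * y⌋ = 3 * ⌊3 * y⌋ + ternDigit y 2 := by
    have h := floor_three_mul (3 * y)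
    have h9 : (3:ℝ) * (3 * y) = 9 * y := by ring
    rw [h9] at h
    unfold ternDigit
    rw [show (3:ℝ)^2 * y = 9 * y by ring]
    omega
  have e3 : ⌊27 * y⌋ = 3 * ⌊9 * y⌋ + ternDigit y 3 := by
    have h := floor_three_mul (9 * y)
    have h27 : (3:ℝ) * (9 * y) = 27 * y := by ring
    rw [h27] at h
    unfold ternDigit
    rw [show (3:ℝ)^3 * y = 27 * y by ring]
    omega
  have hm : ⌊27 * y⌋ = 9 * ternDigit y 1 + 3 * ternDigit y 2 + ternDigit y 3 := by omega
  have hd1 := hdig 1 le_rfl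
  have hd2 := hdig 2 (by omega)
  have hd3 := hdig 3 (by omega)
  have hmem : ⌊27 * y⌋ = 6 ∨ ⌊27 * y⌋ = 7 ∨ ⌊27 * y⌋ = 15 ∨ ⌊27 * y⌋ = 16 ∨
      ⌊27 * y⌋ = 20 ∨ ⌊27 * y⌋ = 23 := by
    rcases Nat.even_or_odd l with ⟨c, hc⟩ | ⟨c, hc⟩
    · have o1 : Odd (1 + l) := ⟨c, by omega⟩
      have o2 : Even (2 + l) := ⟨c + 1, by omega⟩
      have o3 : Odd (3 + l) := ⟨c + 1, by omega⟩
      have v1 := hodd (1 + l) (by omega) o1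
      have v2 := heven (2 + l) (by omega) o2
      have v3 := hodd (3 + l) (by omega) o3
      rw [hd1, hd2, hd3] at hm
      omega
    · have o1 : Even (1 + l) := ⟨c + 1, by omega⟩
      have o2 : Odd (2 + l) := ⟨c + 1, by omega⟩
      have o3 : Even (3 + l) := ⟨c + 2, by omega⟩
      have v1 := heven (1 + l) (by omega) o1
      have v2 := hodd (2 + l) (by omega) o2
      have v3 := heven (3 + l) (by omega) o3
      rw [hd1, hd2, hd3] at hm
      omega
  exact final_est y k hk ⌊27 * y⌋ (Int.floor_le (27 * y)) (Int.lt_floor_add_one (27 * y)) hmem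
end

section
/- With ψ as above (ternary digits alternating between a digit in {0,1} at odd positions and the digit 2 at even positions) and T the tripling map: if l is even then T^l(ψ) ∈ [k/3, (k+1)/3) for some k ∈ {0,1}, and if l is odd then T^l(ψ) ∈ [2/3, 1). -/
open Set

lemma triplingMap_eq_fract (x : ℝ) : triplingMap x = Int.fract (3 * x) := rfl

lemma iterate_triplingMap (ψ : ℝ) (hψ : ψ ∈ Ico (0 : ℝ) 1) (l : ℕ) :
    triplingMap^[l] ψ = Int.fract ((3 : ℝ) ^ l * ψ) := by
  induction l with
  | zero => simp [Int.fract_eq_self.2 ⟨hψ.1, hψ.2⟩]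
  | succ n ih =>
      rw [Function.iterate_succ_apply', ih, triplingMap_eq_fract]
      have : (3 : ℝ) * Int.fract ((3 : ℝ) ^ n * ψ)
          = 3 * ((3 : ℝ) ^ n * ψ) - (3 * ⌊(3 : ℝ) ^ n * ψ⌋ : ℤ) := by
        rw [Int.fract]; push_cast; ring
      rw [this, Int.fract_sub_intCast, pow_succ]
      ring_nf

lemma floor_three_fract (ψ : ℝ) (l : ℕ) :
    ⌊3 * Int.fract ((3 : ℝ) ^ l * ψ)⌋ = ⌊(3 : ℝ) ^ (l + 1) * ψ⌋ - 3 * ⌊(3 : ℝ) ^ l * ψ⌋ := by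
  have : (3 : ℝ) * Int.fract ((3 : ℝ) ^ l * ψ)
      = (3 : ℝ) ^ (l + 1) * ψ - (3 * ⌊(3 : ℝ) ^ l * ψ⌋ : ℤ) := by
    rw [Int.fract, pow_succ]; push_cast; ring
  rw [this, Int.floor_sub_intCast]

lemma floor_eq_digit (ψ : ℝ) (l : ℕ) :
    ⌊3 * Int.fract ((3 : ℝ) ^ l * ψ)⌋ = ternDigit ψ (l + 1) := by
  have h0 : (0 : ℝ) ≤ Int.fract ((3 : ℝ) ^ l * ψ) := Int.fract_nonneg _
  have h1 : Int.fract ((3 : ℝ) ^ l * ψ) < 1 := Int.fract_lt_one _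
  have hlo : (0 : ℤ) ≤ ⌊3 * Int.fract ((3 : ℝ) ^ l * ψ)⌋ := Int.floor_nonneg.2 (by linarith)
  have hhi : ⌊3 * Int.fract ((3 : ℝ) ^ l * ψ)⌋ < 3 := by
    have : (3 : ℝ) * Int.fract ((3 : ℝ) ^ l * ψ) < 3 := by linarith
    exact_mod_cast Int.floor_lt.2 (by exact_mod_cast this)
  have hmod := floor_three_fract ψ l
  unfold ternDigit
  omega

theorem tripling_orbit_location (ψ : ℝ) (hψ : ψ ∈ Ico (0 : ℝ) 1)
    (hodd : ∀ n : ℕ, 1 ≤ n → Odd n → ternDigit ψ n = 0 ∨ ternDigit ψ n = 1)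
    (heven : ∀ n : ℕ, 1 ≤ n → Even n → ternDigit ψ n = 2) :
    ∀ l : ℕ,
      (Even l → ∃ k : ℕ, (k = 0 ∨ k = 1) ∧
        triplingMap^[l] ψ ∈ Ico ((k : ℝ) / 3) (((k : ℝ) + 1) / 3)) ∧
      (Odd l → triplingMap^[l] ψ ∈ Ico (2 / 3 : ℝ) 1) := by
  intro l
  set y := triplingMap^[l] ψ with hy
  have hyf : y = Int.fract ((3 : ℝ) ^ l * ψ) := iterate_triplingMap ψ hψ l
  have hfloor : ⌊3 * y⌋ = ternDigit ψ (l + 1) := by rw [hyf]; exact floor_eq_digit ψ l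
  constructor
  · intro hl
    have hd := hodd (l + 1) (by omega) (Even.add_one hl)
    rcases hd with hd | hd
    · refine ⟨0, Or.inl rfl, ?_⟩
      have h3y : (0 : ℝ) ≤ 3 * y ∧ 3 * y < 1 := by
        constructor
        · have := Int.floor_nonneg.1 (by rw [hfloor, hd])
          linarith
        · have : ⌊3 * y⌋ < 1 := by rw [hfloor, hd]; norm_num
          have := Int.lt_floor_add_one (3 * y)
          have h2 : (3 : ℝ) * y < ⌊3 * y⌋ + 1 := Int.lt_floor_add_one _
          have h3 : ((⌊3 * y⌋ : ℝ)) ≤ 0 := by rw [hfloor, hd]; norm_num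
          linarith
      constructor <;> [skip; skip] <;> push_cast <;> linarith [h3y.1, h3y.2]
    · refine ⟨1, Or.inr rfl, ?_⟩
      have hle : (1 : ℝ) ≤ 3 * y := by
        have := Int.floor_le (3 * y); rw [hfloor, hd] at this; exact_mod_cast this
      have hlt : 3 * y < 2 := by
        have := Int.lt_floor_add_one (3 * y); rw [hfloor, hd] at this
        push_cast at this; linarith
      constructor <;> push_cast <;> linarith
  · intro hl
    have hd := heven (l + 1) (by omega) (Odd.add_one hl)
    have hle : (2 : ℝ) ≤ 3 * y := by
      have := Int.floor_le (3 * y); rw [hfloor, hd] at this; exact_mod_cast this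
    have hlt : 3 * y < 3 := by
      have := Int.lt_floor_add_one (3 * y); rw [hfloor, hd] at this
      push_cast at this; linarith
    constructor <;> linarith
end
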